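/- Let A be a real symmetric positive definite matrix partitioned in blocks A = [[A_c, C_cp], [C_pc, A_p]] with C_pc = C_cpᵀ, let Â_p = A_p − C_pc A_c⁻¹ C_cp, let S be a real symmetric positive definite m×m matrix, and let G = [G_c G_p] be an arbitrary real m×(c+p) matrix written in conformal column blocks. Defining the residual matrix G_r = G_p − G_c A_c⁻¹ C_cp, one has Tr[S⁻¹ G A⁻¹ Gᵀ] − Tr[S⁻¹ G_c A_c⁻¹ G_cᵀ] = Tr[S⁻¹ G_r Â_p⁻¹ G_rᵀ]. -/

import Mathlib

open Matrix

lemma posDef_block₁₁ {c p : ℕ} {Ac : Matrix (Fin c) (Fin c) ℝ} {Ccp : Matrix (Fin c) (Fin p) ℝ}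
    {Ap : Matrix (Fin p) (Fin p) ℝ}
    (hA : (Matrix.fromBlocks Ac Ccp Ccpᵀ Ap).PosDef) : Ac.PosDef := by
  refine Matrix.PosDef.of_dotProduct_mulVec_pos ?_ fun x hx => ?_
  · have h := congrArg Matrix.toBlocks₁₁ hA.1
    simp [Matrix.toBlocks₁₁, Matrix.fromBlocks, Matrix.IsHermitian] at h
    refine Matrix.IsHermitian.ext fun i j => ?_
    simpa using congrFun (congrFun h i) j
  · have := hA.dotProduct_mulVec_pos (x := Sum.elim x 0) (by simpa using fun h => hx (funext fun i => congrFun h (Sum.inl i)))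
    simpa [Matrix.fromBlocks_mulVec, dotProduct] using this

theorem delta_eta_schur_form {m c p : ℕ}
    (Ac : Matrix (Fin c) (Fin c) ℝ) (Ccp : Matrix (Fin c) (Fin p) ℝ)
    (Ap : Matrix (Fin p) (Fin p) ℝ)
    (hA : (Matrix.fromBlocks Ac Ccp Ccpᵀ Ap).PosDef)
    (S : Matrix (Fin m) (Fin m) ℝ) (hS : S.PosDef)
    (Gc : Matrix (Fin m) (Fin c) ℝ) (Gp : Matrix (Fin m) (Fin p) ℝ) :
    (S⁻¹ * Matrix.fromCols Gc Gp * (Matrix.fromBlocks Ac Ccp Ccpᵀ Ap)⁻¹ *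
        (Matrix.fromCols Gc Gp)ᵀ).trace
      - (S⁻¹ * Gc * Ac⁻¹ * Gcᵀ).trace
      = (S⁻¹ * (Gp - Gc * Ac⁻¹ * Ccp) * (Ap - Ccpᵀ * Ac⁻¹ * Ccp)⁻¹ *
          (Gp - Gc * Ac⁻¹ * Ccp)ᵀ).trace := by
  have hAc : Ac.PosDef := posDef_block₁₁ hA
  haveI iA : Invertible (Matrix.fromBlocks Ac Ccp Ccpᵀ Ap) := hA.isUnit.invertible
  haveI iAc : Invertible Ac := hAc.isUnit.invertible
  haveI iS0 : Invertible (Ap - Ccpᵀ * ⅟Ac * Ccp) :=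
    Matrix.invertibleOfFromBlocks₁₁Invertible Ac Ccp Ccpᵀ Ap
  have hScEq : Ap - Ccpᵀ * ⅟Ac * Ccp = Ap - Ccpᵀ * Ac⁻¹ * Ccp := by
    rw [invOf_eq_nonsing_inv]
  haveI iSc : Invertible (Ap - Ccpᵀ * Ac⁻¹ * Ccp) := hScEq ▸ iS0
  set Sc := Ap - Ccpᵀ * Ac⁻¹ * Ccp with hSc
  have hinv : (Matrix.fromBlocks Ac Ccp Ccpᵀ Ap)⁻¹ =
      Matrix.fromBlocks (Ac⁻¹ + Ac⁻¹ * Ccp * Sc⁻¹ * (Ccpᵀ * Ac⁻¹))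
        (-(Ac⁻¹ * Ccp * Sc⁻¹)) (-(Sc⁻¹ * (Ccpᵀ * Ac⁻¹))) Sc⁻¹ := by
    rw [← invOf_eq_nonsing_inv, Matrix.invOf_fromBlocks₁₁_eq]
    simp only [invOf_eq_nonsing_inv, hScEq, hSc, Matrix.mul_assoc]
  have hAcs : Ac⁻¹ᵀ = Ac⁻¹ := by
    have := hAc.inv.1
    simpa [Matrix.IsHermitian] using this
  have key : Matrix.fromCols Gc Gp * (Matrix.fromBlocks Ac Ccp Ccpᵀ Ap)⁻¹ *
      (Matrix.fromCols Gc Gp)ᵀ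
      = Gc * (Ac⁻¹ * Gcᵀ) +
        (Gp - Gc * Ac⁻¹ * Ccp) * (Sc⁻¹ * (Gp - Gc * Ac⁻¹ * Ccp)ᵀ) := by
    rw [hinv, transpose_fromCols, fromCols_mul_fromBlocks, fromCols_mul_fromRows]
    simp only [Matrix.mul_add, Matrix.add_mul, Matrix.sub_mul, Matrix.mul_sub,
      Matrix.neg_mul, Matrix.mul_neg, Matrix.transpose_sub, Matrix.transpose_mul, hAcs,
      Matrix.mul_assoc]
    abel
  calc (S⁻¹ * Matrix.fromCols Gc Gp * (Matrix.fromBlocks Ac Ccp Ccpᵀ Ap)⁻¹ *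
        (Matrix.fromCols Gc Gp)ᵀ).trace - (S⁻¹ * Gc * Ac⁻¹ * Gcᵀ).trace
      = (S⁻¹ * (Matrix.fromCols Gc Gp * (Matrix.fromBlocks Ac Ccp Ccpᵀ Ap)⁻¹ *
        (Matrix.fromCols Gc Gp)ᵀ)).trace - (S⁻¹ * Gc * Ac⁻¹ * Gcᵀ).trace := by
        simp only [Matrix.mul_assoc]
    _ = (S⁻¹ * (Gp - Gc * Ac⁻¹ * Ccp) * Sc⁻¹ * (Gp - Gc * Ac⁻¹ * Ccp)ᵀ).trace := by
        rw [key, Matrix.mul_add, Matrix.trace_add]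
        simp only [Matrix.mul_assoc]
        ring
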